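/- Let f : (i : Fin n) → ((∀ j, D j) → ℝ≥0) be the factors of a Bayesian network given in topological order with parent map pa, and let A ⊆ Fin n be a parent-closed Finset. Then for every assignment x : ∀ j, D j, the sum over all assignments y satisfying y j = x j for all j ∈ A of ∏_{i : Fin n} f i y equals ∏_{i ∈ A} f i x. In other words, marginalizing the full joint product onto the variables of a parent-closed prefix yields exactly the product of the factors of that prefix. -/
import Mathlib


/-- A factor `φ` is *local* to a set of variables `C` if it only depends on the
coordinates in `C`. -/
def IsLocal {n : ℕ} {D : Fin n → Type} (C : Finset (Fin n))
    (φ : (∀ j, D j) → NNReal) : Prop :=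
  ∀ x y : ∀ j, D j, (∀ j ∈ C, x j = y j) → φ x = φ y

lemma bn_aux
    (n : ℕ) (D : Fin n → Type) [∀ i, Fintype (D i)] [∀ i, Nonempty (D i)]
    [∀ i, DecidableEq (D i)]
    (pa : Fin n → Finset (Fin n)) (hpa : ∀ i : Fin n, ∀ j ∈ pa i, j < i)
    (f : ∀ _ : Fin n, (∀ j, D j) → NNReal)
    (hlocal : ∀ i : Fin n, IsLocal (insert i (pa i)) (f i))
    (hnorm : ∀ (x : ∀ j, D j) (i : Fin n),
      ∑ s : D i, f i (Function.update x i s) = 1) :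
    ∀ (k : ℕ) (A : Finset (Fin n)), Aᶜ.card = k → (∀ i ∈ A, pa i ⊆ A) →
    ∀ (x : ∀ j, D j),
    ∑ y ∈ Finset.univ.filter (fun y : ∀ j, D j => ∀ j ∈ A, y j = x j),
      ∏ i ∈ Aᶜ, f i y = 1 := by
  intro k
  induction k with
  | zero =>
    intro A hcard hA x
    have hAu : A = Finset.univ := by
      have : Aᶜ = ∅ := Finset.card_eq_zero.mp hcard
      simpa [Finset.compl_eq_empty_iff] using this
    subst hAu
    have hfilt : Finset.univ.filter (fun y : ∀ j, D j => ∀ j ∈ (Finset.univ : Finset (Fin n)), y j = x j) = {x} := by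
      ext y
      simp [funext_iff]
    rw [hfilt, Finset.sum_singleton]
    simp
  | succ k ih =>
    intro A hcard hA x
    have hne : Aᶜ.Nonempty := by
      rw [← Finset.card_pos, hcard]; omega
    set i := Aᶜ.min' hne with hi
    have hiA : i ∉ A := by
      have := Finset.min'_mem Aᶜ hne
      simpa using this
    have hmin : ∀ j ∈ Aᶜ, i ≤ j := fun j hj => Finset.min'_le _ _ hj
    set A' := insert i A with hA'
    have hA'c : A'ᶜ = Aᶜ.erase i := by
      ext j; simp [hA', and_comm]
    have hcard' : A'ᶜ.card = k := by
      rw [hA'c, Finset.card_erase_of_mem (by simpa using hiA), hcard]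
      omega
    have hAc : Aᶜ = insert i A'ᶜ := by
      rw [hA'c, Finset.insert_erase (by simpa using hiA)]
    have hpaiA : pa i ⊆ A := by
      intro j hj
      by_contra hjA
      have : i ≤ j := hmin j (by simpa using hjA)
      exact absurd (hpa i j hj) (by omega)
    have hclosed' : ∀ l ∈ A', pa l ⊆ A' := by
      intro l hl
      rcases Finset.mem_insert.mp hl with h | h
      · subst h; exact hpaiA.trans (Finset.subset_insert _ _)
      · exact (hA l h).trans (Finset.subset_insert _ _)
    -- split the sum by the value at i
    have hsplit : (Finset.univ.filter (fun y : ∀ j, D j => ∀ j ∈ A, y j = x j))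
        = (Finset.univ : Finset (D i)).biUnion
            (fun s => Finset.univ.filter
              (fun y : ∀ j, D j => ∀ j ∈ A', y j = Function.update x i s j)) := by
      ext y
      simp only [Finset.mem_filter, Finset.mem_biUnion, Finset.mem_univ, true_and]
      constructor
      · intro h
        refine ⟨y i, ?_⟩
        intro j hj
        rcases Finset.mem_insert.mp hj with rfl | hj
        · simp
        · rw [Function.update_of_ne (by rintro rfl; exact hiA hj)]
          exact h j hj
      · rintro ⟨s, hs⟩ j hj
        have := hs j (Finset.mem_insert_of_mem hj)
        rwa [Function.update_of_ne (by rintro rfl; exact hiA hj)] at this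
    have hdisj : ∀ s ∈ (Finset.univ : Finset (D i)), ∀ t ∈ (Finset.univ : Finset (D i)), s ≠ t →
        Disjoint (Finset.univ.filter
              (fun y : ∀ j, D j => ∀ j ∈ A', y j = Function.update x i s j))
          (Finset.univ.filter
              (fun y : ∀ j, D j => ∀ j ∈ A', y j = Function.update x i t j)) := by
      intro s _ t _ hst
      rw [Finset.disjoint_left]
      intro y hy hy'
      have h1 := (Finset.mem_filter.mp hy).2 i (Finset.mem_insert_self _ _)
      have h2 := (Finset.mem_filter.mp hy').2 i (Finset.mem_insert_self _ _)
      simp only [Function.update_self] at h1 h2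
      exact hst (h1 ▸ h2)
    rw [hsplit, Finset.sum_biUnion hdisj]
    have hinner : ∀ s : D i,
        ∑ y ∈ Finset.univ.filter
            (fun y : ∀ j, D j => ∀ j ∈ A', y j = Function.update x i s j),
          ∏ l ∈ Aᶜ, f l y
        = f i (Function.update x i s) := by
      intro s
      have : ∀ y ∈ Finset.univ.filter
            (fun y : ∀ j, D j => ∀ j ∈ A', y j = Function.update x i s j),
          ∏ l ∈ Aᶜ, f l y = f i (Function.update x i s) * ∏ l ∈ A'ᶜ, f l y := by
        intro y hy
        have hy' := (Finset.mem_filter.mp hy).2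
        rw [hAc, Finset.prod_insert (by rw [hA'c]; simp)]
        congr 1
        refine hlocal i y _ ?_
        intro j hj
        rcases Finset.mem_insert.mp hj with rfl | hj
        · exact hy' i (Finset.mem_insert_self _ _)
        · exact hy' j (Finset.mem_insert_of_mem (hpaiA hj))
      rw [Finset.sum_congr rfl this, ← Finset.mul_sum,
        ih A' hcard' hclosed' (Function.update x i s), mul_one]
    rw [Finset.sum_congr rfl (fun s _ => hinner s)]
    exact hnorm x i

/-- For a Bayesian network given in topological order, marginalizing the full joint
product onto the variables of a parent-closed prefix `A` yields exactly the product
of the factors of that prefix. -/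
theorem bn_marginal_onto_parent_closed_prefix
    (n : ℕ) (D : Fin n → Type) [∀ i, Fintype (D i)] [∀ i, Nonempty (D i)]
    [∀ i, DecidableEq (D i)]
    (pa : Fin n → Finset (Fin n)) (hpa : ∀ i : Fin n, ∀ j ∈ pa i, j < i)
    (f : ∀ _ : Fin n, (∀ j, D j) → NNReal)
    (hlocal : ∀ i : Fin n, IsLocal (insert i (pa i)) (f i))
    (hnorm : ∀ (x : ∀ j, D j) (i : Fin n),
      ∑ s : D i, f i (Function.update x i s) = 1)
    (A : Finset (Fin n)) (hA : ∀ i ∈ A, pa i ⊆ A)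
    (x : ∀ j, D j) :
    ∑ y ∈ Finset.univ.filter (fun y : ∀ j, D j => ∀ j ∈ A, y j = x j),
      ∏ i : Fin n, f i y = ∏ i ∈ A, f i x := by

  have key : ∀ y ∈ Finset.univ.filter (fun y : ∀ j, D j => ∀ j ∈ A, y j = x j),
      ∏ i : Fin n, f i y = (∏ i ∈ A, f i x) * ∏ i ∈ Aᶜ, f i y := by
    intro y hy
    have hy' := (Finset.mem_filter.mp hy).2
    rw [← Finset.prod_mul_prod_compl A (fun i => f i y)]
    congr 1
    refine Finset.prod_congr rfl fun l hl => ?_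
    refine hlocal l y x ?_
    intro j hj
    rcases Finset.mem_insert.mp hj with h | hj
    · rw [h]; exact hy' l hl
    · exact hy' j (hA l hl hj)
  rw [Finset.sum_congr rfl key, ← Finset.mul_sum,
    bn_aux n D pa hpa f hlocal hnorm Aᶜ.card A rfl hA x, mul_one]
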